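/- Let u : ℝ/2πℤ → ℝ be Hölder continuous with exponent α ∈ (0,1], i.e., |u(x) − u(y)| ≤ M·|x − y|^α for all x, y. Then the periodic Hilbert transform Hu(x) = (1/2π) p.v. ∫_{−π}^{π} u(y) cot((x−y)/2) dy satisfies ‖Hu‖_∞ ≤ C(α)·‖u‖_∞·(1 + log₊(M/‖u‖_∞)) for some constant C(α) depending only on α, where log₊(t) = max(log t, 0). -/

import Mathlib

open Real Set Filter Topology MeasureTheory

private lemma kato_sin_lb {z : ℝ} (h0 : 0 < z) (hπ : z ≤ π) : z / π ≤ Real.sin (z / 2) := by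
  have h := Real.mul_le_sin (x := z / 2) (by linarith) (by linarith)
  have : 2 / π * (z / 2) = z / π := by ring
  linarith [this ▸ h]

private lemma kato_sin_pos {z : ℝ} (h0 : 0 < z) (hπ : z ≤ π) : 0 < Real.sin (z / 2) :=
  lt_of_lt_of_le (by positivity) (kato_sin_lb h0 hπ)

private lemma kato_cot_bound {z : ℝ} (h0 : 0 < z) (hπ : z ≤ π) :
    |Real.cos (z / 2) / Real.sin (z / 2)| ≤ π / z := by
  have hs := kato_sin_lb h0 hπ
  have hsp := kato_sin_pos h0 hπ
  rw [abs_div, abs_of_pos hsp]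
  have h1 : |Real.cos (z / 2)| ≤ 1 := Real.abs_cos_le_one _
  have : |Real.cos (z / 2)| / Real.sin (z / 2) ≤ 1 / (z / π) :=
    div_le_div₀ (by norm_num) h1 (by positivity) hs
  rwa [one_div_div] at this

/-- Kato's inequality: for a `2π`-periodic Hölder continuous function `u` (with
exponent `α` and Hölder constant `M`), not identically zero, the periodic Hilbert
transform `Hu(x) = (1/2π) p.v. ∫_{x-π}^{x+π} u(y) cot((x−y)/2) dy` satisfies
`‖Hu‖_∞ ≤ C(α)·‖u‖_∞·(1 + log₊(M/‖u‖_∞))`. -/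
theorem kato_inequality (α : ℝ) (hα : α ∈ Set.Ioc (0:ℝ) 1) :
    ∃ C > (0:ℝ), ∀ (u Hu : ℝ → ℝ) (M A : ℝ),
      Continuous u → Function.Periodic u (2*π) →
      0 < M →
      (∀ x y : ℝ, |u x - u y| ≤ M * |x - y| ^ α) →
      A = ⨆ x : ℝ, |u x| → 0 < A →
      (∀ x : ℝ, Filter.Tendsto (fun ε : ℝ =>
          (1/(2*π)) * ∫ y in Set.Ioo (x - π) (x + π) \ Set.Ioo (x - ε) (x + ε),
            u y * (Real.cos ((x - y)/2) / Real.sin ((x - y)/2)))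
          (𝓝[>] 0) (𝓝 (Hu x))) →
      ∀ x : ℝ, |Hu x| ≤ C * A * (1 + max (Real.log (M / A)) 0) := by
  obtain ⟨hα0, hα1⟩ := hα
  refine ⟨3 + 2 / α, by positivity, ?_⟩
  intro u Hu M A hu hper hM hhol hAdef hA htend x
  set L : ℝ := max (Real.log (M / A)) 0 with hLdef
  have hL0 : 0 ≤ L := le_max_right _ _
  -- sup bound
  have hbdd : BddAbove (range fun t => |u t|) := by
    have hp : Function.Periodic (fun t => |u t|) (2*π) := fun t => by
      simp [hper t]
    have hb := hp.isBounded_of_continuous (by positivity) hu.abs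
    exact (isBounded_iff_bddBelow_bddAbove.mp hb).2
  have hAbd : ∀ t : ℝ, |u t| ≤ A := by
    intro t
    rw [hAdef]
    exact le_ciSup hbdd t
  -- threshold
  set δ : ℝ := min π ((A / M) ^ (α⁻¹ : ℝ)) with hδdef
  have hδpos : 0 < δ := lt_min Real.pi_pos (Real.rpow_pos_of_pos (by positivity) _)
  have hδπ : δ ≤ π := min_le_left _ _
  have hMδ : M * δ ^ α ≤ A := by
    have h1 : δ ^ α ≤ ((A / M) ^ (α⁻¹ : ℝ)) ^ α :=
      Real.rpow_le_rpow hδpos.le (min_le_right _ _) hα0.le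
    rw [Real.rpow_inv_rpow (by positivity) (ne_of_gt hα0)] at h1
    calc M * δ ^ α ≤ M * (A / M) := by nlinarith
      _ = A := by field_simp
  have hlogδ : Real.log (π / δ) ≤ 3 + α⁻¹ * L := by
    rcases le_or_gt ((A / M) ^ (α⁻¹ : ℝ)) π with h | h
    · have hδeq : δ = (A / M) ^ (α⁻¹ : ℝ) := min_eq_right h
      have hlt : Real.log ((A / M) ^ (α⁻¹ : ℝ)) = α⁻¹ * Real.log (A / M) :=
        Real.log_rpow (by positivity) _
      have hAM : Real.log (A / M) = -Real.log (M / A) := by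
        rw [← Real.log_inv]; congr 1; rw [inv_div]
      have hπ4 : Real.log π ≤ 3 := by
        have := Real.log_le_sub_one_of_pos Real.pi_pos
        nlinarith [Real.pi_le_four]
      have hML : Real.log (M / A) ≤ L := le_max_left _ _
      rw [Real.log_div (ne_of_gt Real.pi_pos) (ne_of_gt hδpos), hδeq, hlt, hAM]
      have : α⁻¹ * Real.log (M / A) ≤ α⁻¹ * L := by
        apply mul_le_mul_of_nonneg_left hML (by positivity)
      linarith
    · have hδeq : δ = π := min_eq_left h.le
      rw [hδeq, div_self (ne_of_gt Real.pi_pos), Real.log_one]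
      positivity
  have hlogδ0 : 0 ≤ Real.log (π / δ) :=
    Real.log_nonneg ((one_le_div hδpos).mpr hδπ)
  -- sin nonvanishing
  have hsinne : ∀ z : ℝ, 0 < z → z ≤ π → Real.sin (z / 2) ≠ 0 :=
    fun z h0 hπ => ne_of_gt (kato_sin_pos h0 hπ)
  have hsinne2 : ∀ w : ℝ, w ≠ 0 → |w| ≤ π → Real.sin (w / 2) ≠ 0 := by
    intro w hw hle
    rcases lt_or_gt_of_ne hw with h | h
    · have h2 : Real.sin (-w / 2) ≠ 0 := by
        apply hsinne (-w) (by linarith)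
        rw [abs_of_neg h] at hle; linarith
      intro hc
      apply h2
      rw [neg_div, Real.sin_neg, hc, neg_zero]
    · exact hsinne w h (by rwa [abs_of_pos h] at hle)
  -- continuity of w(z) * cot(z/2) on [a,b] ⊆ (0, π]
  have hcont : ∀ (w : ℝ → ℝ), Continuous w → ∀ a b : ℝ, 0 < a → b ≤ π →
      ContinuousOn (fun z => w z * (Real.cos (z/2) / Real.sin (z/2))) (Icc a b) := by
    intro w hw a b ha hb
    apply (hw.continuousOn).mul
    apply ContinuousOn.div
    · exact (Real.continuous_cos.comp (continuous_id.div_const 2)).continuousOn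
    · exact (Real.continuous_sin.comp (continuous_id.div_const 2)).continuousOn
    · intro z hz
      exact hsinne z (lt_of_lt_of_le ha hz.1) (le_trans hz.2 hb)
  have hII : ∀ (w : ℝ → ℝ), Continuous w → ∀ a b : ℝ, 0 < a → a ≤ b → b ≤ π →
      IntervalIntegrable (fun z => w z * (Real.cos (z/2) / Real.sin (z/2))) volume a b := by
    intro w hw a b ha hab hb
    apply ContinuousOn.intervalIntegrable
    rw [uIcc_of_le hab]
    exact hcont w hw a b ha hb
  -- the main uniform bound for the truncated integrals
  have hbound : ∀ ε : ℝ, ε ∈ Ioo 0 δ →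
      |(1/(2*π)) * ∫ y in Ioo (x - π) (x + π) \ Ioo (x - ε) (x + ε),
          u y * (Real.cos ((x - y)/2) / Real.sin ((x - y)/2))|
        ≤ (3 + 2 / α) * A * (1 + L) := by
    intro ε hε
    obtain ⟨hε0, hεδ⟩ := hε
    have hεπ : ε < π := lt_of_lt_of_le hεδ hδπ
    -- set splitting
    have hset : Ioo (x-π) (x+π) \ Ioo (x-ε) (x+ε)
        = Ioc (x-π) (x-ε) ∪ Ico (x+ε) (x+π) := by
      ext y
      simp only [mem_diff, mem_Ioo, mem_union, mem_Ioc, mem_Ico, not_and, not_lt]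
      constructor
      · rintro ⟨⟨h1, h2⟩, h3⟩
        rcases le_or_gt y (x - ε) with h | h
        · exact Or.inl ⟨h1, h⟩
        · exact Or.inr ⟨h3 h, h2⟩
      · rintro (⟨h1, h2⟩ | ⟨h1, h2⟩)
        · exact ⟨⟨h1, by linarith⟩, fun h => by linarith⟩
        · exact ⟨⟨by linarith, h2⟩, fun _ => h1⟩
    -- integrability on the two pieces
    have hcontL : ContinuousOn (fun y => u y * (Real.cos ((x - y)/2) / Real.sin ((x - y)/2)))
        (Icc (x-π) (x-ε)) := by
      apply (hu.continuousOn).mul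
      apply ContinuousOn.div
      · exact (Real.continuous_cos.comp ((continuous_const.sub continuous_id).div_const 2)).continuousOn
      · exact (Real.continuous_sin.comp ((continuous_const.sub continuous_id).div_const 2)).continuousOn
      · intro y hy
        have hxy : 0 < x - y := by linarith [hy.2]
        apply hsinne2 (x - y) (ne_of_gt hxy)
        rw [abs_of_pos hxy]
        linarith [hy.1]
    have hcontR : ContinuousOn (fun y => u y * (Real.cos ((x - y)/2) / Real.sin ((x - y)/2)))
        (Icc (x+ε) (x+π)) := by
      apply (hu.continuousOn).mul
      apply ContinuousOn.div
      · exact (Real.continuous_cos.comp ((continuous_const.sub continuous_id).div_const 2)).continuousOn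
      · exact (Real.continuous_sin.comp ((continuous_const.sub continuous_id).div_const 2)).continuousOn
      · intro y hy
        have hxy : x - y < 0 := by linarith [hy.1]
        apply hsinne2 (x - y) (ne_of_lt hxy)
        rw [abs_of_neg hxy]
        linarith [hy.2]
    have hIntL : IntegrableOn (fun y => u y * (Real.cos ((x - y)/2) / Real.sin ((x - y)/2)))
        (Ioc (x-π) (x-ε)) volume :=
      (hcontL.integrableOn_Icc).mono_set Ioc_subset_Icc_self
    have hIntR : IntegrableOn (fun y => u y * (Real.cos ((x - y)/2) / Real.sin ((x - y)/2)))
        (Ico (x+ε) (x+π)) volume :=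
      (hcontR.integrableOn_Icc).mono_set Ico_subset_Icc_self
    -- rewrite the set integral as a single interval integral over (ε, π)
    have key : (∫ y in Ioo (x - π) (x + π) \ Ioo (x - ε) (x + ε),
          u y * (Real.cos ((x - y)/2) / Real.sin ((x - y)/2)))
        = ∫ z in ε..π, (u (x - z) - u (x + z)) * (Real.cos (z/2) / Real.sin (z/2)) := by
      rw [hset, setIntegral_union (by
          rw [Set.disjoint_left]
          intro y h1 h2
          have := h1.2; have := h2.1; linarith) measurableSet_Ico hIntL hIntR]
      rw [MeasureTheory.integral_Ico_eq_integral_Ioo, ← MeasureTheory.integral_Ioc_eq_integral_Ioo]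
      rw [← intervalIntegral.integral_of_le (by linarith : x - π ≤ x - ε),
          ← intervalIntegral.integral_of_le (by linarith : x + ε ≤ x + π)]
      have hfun : (fun y => u y * (Real.cos ((x - y)/2) / Real.sin ((x - y)/2)))
          = fun y => (fun z => u (x - z) * (Real.cos (z/2) / Real.sin (z/2))) (x - y) := by
        funext y
        simp only [sub_sub_cancel]
      rw [hfun, intervalIntegral.integral_comp_sub_left
            (fun z => u (x - z) * (Real.cos (z/2) / Real.sin (z/2))) x,
          intervalIntegral.integral_comp_sub_left
            (fun z => u (x - z) * (Real.cos (z/2) / Real.sin (z/2))) x,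
          show x - (x - ε) = ε from by ring, show x - (x - π) = π from by ring,
          show x - (x + π) = -π from by ring, show x - (x + ε) = -ε from by ring]
      have hneg : (∫ z in (-π)..(-ε), u (x - z) * (Real.cos (z/2) / Real.sin (z/2)))
          = ∫ z in ε..π, -(u (x + z) * (Real.cos (z/2) / Real.sin (z/2))) := by
        rw [← intervalIntegral.integral_comp_neg
          (fun z => u (x - z) * (Real.cos (z/2) / Real.sin (z/2)))]
        apply intervalIntegral.integral_congr
        intro z _
        simp only [sub_neg_eq_add, neg_div, Real.cos_neg, Real.sin_neg, div_neg, mul_neg]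
      rw [hneg, intervalIntegral.integral_neg]
      have h1 : IntervalIntegrable (fun z => u (x - z) * (Real.cos (z/2) / Real.sin (z/2)))
          volume ε π := hII (fun z => u (x - z))
        (hu.comp (continuous_const.sub continuous_id)) ε π hε0 hεπ.le le_rfl
      have h2 : IntervalIntegrable (fun z => u (x + z) * (Real.cos (z/2) / Real.sin (z/2)))
          volume ε π := hII (fun z => u (x + z))
        (hu.comp (continuous_const.add continuous_id)) ε π hε0 hεπ.le le_rfl
      rw [← sub_eq_add_neg, ← intervalIntegral.integral_sub h1 h2]
      apply intervalIntegral.integral_congr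
      intro z _
      ring
    -- now bound the interval integral
    set F : ℝ → ℝ := fun z => (u (x - z) - u (x + z)) * (Real.cos (z/2) / Real.sin (z/2)) with hF
    have hFI : ∀ a b : ℝ, 0 < a → a ≤ b → b ≤ π → IntervalIntegrable F volume a b :=
      fun a b ha hab hb => hII _ (((hu.comp (continuous_const.sub continuous_id))).sub
        ((hu.comp (continuous_const.add continuous_id)))) a b ha hab hb
    have hsplit : (∫ z in ε..π, F z) = (∫ z in ε..δ, F z) + ∫ z in δ..π, F z :=
      (intervalIntegral.integral_add_adjacent_intervals
        (hFI ε δ hε0 hεδ.le hδπ) (hFI δ π hδpos hδπ le_rfl)).symm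
    -- near bound
    have hnear : |∫ z in ε..δ, F z| ≤ 2 * M * π * (δ ^ α / α) := by
      have hgI : IntervalIntegrable (fun z : ℝ => 2 * M * π * z ^ (α - 1)) volume ε δ := by
        apply ContinuousOn.intervalIntegrable
        rw [uIcc_of_le hεδ.le]
        exact continuousOn_const.mul (continuousOn_id.rpow_const
          (fun z hz => Or.inl (ne_of_gt (lt_of_lt_of_le hε0 hz.1))))
      have hptw : ∀ z ∈ Set.uIoc ε δ, ‖F z‖ ≤ 2 * M * π * z ^ (α - 1) := by
        intro z hz
        rw [uIoc_of_le hεδ.le] at hz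
        have hz0 : 0 < z := lt_trans hε0 hz.1
        have hzπ : z ≤ π := le_trans hz.2 hδπ
        have h1 : |u (x - z) - u (x + z)| ≤ 2 * M * z ^ α := by
          have := hhol (x - z) (x + z)
          have habs : |(x - z) - (x + z)| = 2 * z := by
            rw [show (x - z) - (x + z) = -(2*z) from by ring, abs_neg,
              abs_of_pos (by linarith)]
          rw [habs] at this
          have h2α : (2*z) ^ α ≤ 2 * z ^ α := by
            rw [Real.mul_rpow (by norm_num) hz0.le]
            have : (2:ℝ) ^ α ≤ 2 := by
              calc (2:ℝ) ^ α ≤ (2:ℝ) ^ (1:ℝ) :=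
                Real.rpow_le_rpow_of_exponent_le (by norm_num) hα1
                _ = 2 := Real.rpow_one 2
            nlinarith [Real.rpow_nonneg hz0.le α]
          nlinarith
        have h2 : |Real.cos (z/2) / Real.sin (z/2)| ≤ π / z := kato_cot_bound hz0 hzπ
        have : ‖F z‖ ≤ (2 * M * z ^ α) * (π / z) := by
          rw [hF, Real.norm_eq_abs, abs_mul]
          apply mul_le_mul h1 h2 (abs_nonneg _) (by positivity)
        calc ‖F z‖ ≤ (2 * M * z ^ α) * (π / z) := this
          _ = 2 * M * π * z ^ (α - 1) := by
            rw [Real.rpow_sub hz0, Real.rpow_one]; ring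
      have h := intervalIntegral.norm_integral_le_abs_of_norm_le
        ((ae_restrict_iff' measurableSet_uIoc).mpr (Filter.Eventually.of_forall hptw)) hgI
      rw [Real.norm_eq_abs] at h
      have hcomp : (∫ z in ε..δ, 2 * M * π * z ^ (α - 1)) = 2 * M * π * ((δ ^ α - ε ^ α) / α) := by
        rw [intervalIntegral.integral_const_mul, integral_rpow (Or.inl (by linarith)),
          sub_add_cancel]
      have hεα : ε ^ α ≤ δ ^ α := Real.rpow_le_rpow hε0.le hεδ.le hα0.le
      have hεα0 : 0 ≤ ε ^ α := Real.rpow_nonneg hε0.le α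
      have habs2 : |∫ z in ε..δ, 2 * M * π * z ^ (α - 1)| = 2 * M * π * ((δ ^ α - ε ^ α) / α) := by
        rw [hcomp, abs_of_nonneg]
        have h0 : 0 ≤ (δ ^ α - ε ^ α) / α := div_nonneg (by linarith) hα0.le
        positivity
      rw [habs2] at h
      calc |∫ z in ε..δ, F z| ≤ 2 * M * π * ((δ ^ α - ε ^ α) / α) := h
        _ ≤ 2 * M * π * (δ ^ α / α) := by gcongr; linarith
    -- far bound
    have hfar : |∫ z in δ..π, F z| ≤ 2 * A * π * Real.log (π / δ) := by
      have hgI : IntervalIntegrable (fun z : ℝ => 2 * A * π * (1 / z)) volume δ π := by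
        apply ContinuousOn.intervalIntegrable
        rw [uIcc_of_le hδπ]
        apply continuousOn_const.mul
        apply ContinuousOn.div continuousOn_const continuousOn_id
        intro z hz
        exact ne_of_gt (lt_of_lt_of_le hδpos hz.1)
      have hptw : ∀ z ∈ Set.uIoc δ π, ‖F z‖ ≤ 2 * A * π * (1 / z) := by
        intro z hz
        rw [uIoc_of_le hδπ] at hz
        have hz0 : 0 < z := lt_trans hδpos hz.1
        have hzπ : z ≤ π := hz.2
        have h1 : |u (x - z) - u (x + z)| ≤ 2 * A := by
          calc |u (x - z) - u (x + z)| ≤ |u (x - z)| + |u (x + z)| := abs_sub _ _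
            _ ≤ A + A := add_le_add (hAbd _) (hAbd _)
            _ = 2 * A := by ring
        have h2 : |Real.cos (z/2) / Real.sin (z/2)| ≤ π / z := kato_cot_bound hz0 hzπ
        have : ‖F z‖ ≤ (2 * A) * (π / z) := by
          rw [hF, Real.norm_eq_abs, abs_mul]
          apply mul_le_mul h1 h2 (abs_nonneg _) (by positivity)
        calc ‖F z‖ ≤ (2 * A) * (π / z) := this
          _ = 2 * A * π * (1 / z) := by ring
      have h := intervalIntegral.norm_integral_le_abs_of_norm_le
        ((ae_restrict_iff' measurableSet_uIoc).mpr (Filter.Eventually.of_forall hptw)) hgI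
      rw [Real.norm_eq_abs] at h
      have hcomp : (∫ z in δ..π, 2 * A * π * (1 / z)) = 2 * A * π * Real.log (π / δ) := by
        rw [intervalIntegral.integral_const_mul, integral_one_div]
        intro hc
        rw [uIcc_of_le hδπ, mem_Icc] at hc
        linarith [hc.1]
      have habs2 : |∫ z in δ..π, 2 * A * π * (1 / z)| = 2 * A * π * Real.log (π / δ) := by
        rw [hcomp]
        exact abs_of_nonneg (mul_nonneg (by positivity) hlogδ0)
      rw [habs2] at h
      exact h
    -- combine
    calc |(1/(2*π)) * ∫ y in Ioo (x - π) (x + π) \ Ioo (x - ε) (x + ε),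
          u y * (Real.cos ((x - y)/2) / Real.sin ((x - y)/2))|
        = (1/(2*π)) * |∫ z in ε..π, F z| := by
          rw [key, abs_mul, abs_of_pos (by positivity : (0:ℝ) < 1/(2*π))]
      _ ≤ (1/(2*π)) * (2 * M * π * (δ ^ α / α) + 2 * A * π * Real.log (π / δ)) := by
          apply mul_le_mul_of_nonneg_left _ (by positivity)
          calc |∫ z in ε..π, F z| ≤ |∫ z in ε..δ, F z| + |∫ z in δ..π, F z| := by
                rw [hsplit]; exact abs_add_le _ _
            _ ≤ _ := add_le_add hnear hfar
      _ = M * δ ^ α / α + A * Real.log (π / δ) := by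
          field_simp
      _ ≤ A / α + A * (3 + α⁻¹ * L) := by
          apply add_le_add
          · gcongr
          · exact mul_le_mul_of_nonneg_left hlogδ hA.le
      _ ≤ (3 + 2 / α) * A * (1 + L) := by
          rw [div_eq_mul_inv, div_eq_mul_inv]
          have h1 : 0 ≤ A * L * α⁻¹ := by positivity
          have h2 : 0 ≤ A * α⁻¹ := by positivity
          have h3 : 0 ≤ A * L := by positivity
          nlinarith
  -- pass to the limit
  have hev : ∀ᶠ ε in 𝓝[>] (0:ℝ),
      |(1/(2*π)) * ∫ y in Ioo (x - π) (x + π) \ Ioo (x - ε) (x + ε),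
          u y * (Real.cos ((x - y)/2) / Real.sin ((x - y)/2))|
        ≤ (3 + 2 / α) * A * (1 + L) :=
    Filter.eventually_of_mem (Ioo_mem_nhdsGT_of_mem ⟨le_refl 0, hδpos⟩) hbound
  exact le_of_tendsto ((htend x).abs) hev
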